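/- Let d ≥ 1, n = (n₁,…,n_d) with each n_j ≥ 1, and let A ∈ ℂ^{n×n} be a density tensor. Then ‖A‖_{1,ℂ} ≥ 1, and equality ‖A‖_{1,ℂ} = 1 holds if and only if A is separable. -/

import Mathlib

open scoped ComplexOrder

noncomputable section


/-- The Euclidean norm of a vector in `ℂ^k`. -/
def vnorm {k : ℕ} (x : Fin k → ℂ) : ℝ :=
  Real.sqrt (∑ i, ‖x i‖ ^ 2)

/-- Multi-indices for `ℂ^{n₁ × ⋯ × n_d}`. -/
abbrev MIdx (d : ℕ) (n : Fin d → ℕ) := ∀ j, Fin (n j)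

/-- The trace of a `2d`-mode tensor `A ∈ ℂ^{n×n}`, viewed as a matrix. -/
def traceT {d : ℕ} {n : Fin d → ℕ} (A : MIdx d n → MIdx d n → ℂ) : ℂ :=
  ∑ p, A p p

/-- The nuclear norm of a `2d`-mode tensor `A ∈ ℂ^{n×n}`:
the minimum of `∑ᵢ (∏ⱼ ‖x_{j,i}‖)·(∏ⱼ ‖y_{j,i}‖)` over decompositions
`A = ∑ᵢ x_{1,i}⊗⋯⊗x_{d,i}⊗y_{1,i}⊗⋯⊗y_{d,i}`. -/
def nucNorm2 {d : ℕ} {n : Fin d → ℕ} (A : MIdx d n → MIdx d n → ℂ) : ℝ :=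
  sInf {r : ℝ | ∃ (m : ℕ) (x y : Fin m → ∀ j, Fin (n j) → ℂ),
    A = (fun p q => ∑ i, (∏ j, x i j (p j)) * (∏ j, y i j (q j))) ∧
    r = ∑ i, (∏ j, vnorm (x i j)) * (∏ j, vnorm (y i j))}

/-- A density tensor: hermitian positive semidefinite with trace one. -/
def IsDensity {d : ℕ} {n : Fin d → ℕ} (A : MIdx d n → MIdx d n → ℂ) : Prop :=
  (Matrix.of A).PosSemidef ∧ traceT A = 1

/-- A separable (density) tensor:
`A = ∑ᵢ pᵢ (x_{1,i}⊗⋯⊗x_{d,i}) ⊗ (conj x_{1,i}⊗⋯⊗conj x_{d,i})` with unit vectors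
`x_{j,i}`, `pᵢ ≥ 0`, `∑ pᵢ = 1`. -/
def Separable {d : ℕ} {n : Fin d → ℕ} (A : MIdx d n → MIdx d n → ℂ) : Prop :=
  ∃ (r : ℕ) (p : Fin r → ℝ) (x : Fin r → ∀ j, Fin (n j) → ℂ),
    (∀ i j, vnorm (x i j) = 1) ∧ (∀ i, 0 ≤ p i) ∧ (∑ i, p i) = 1 ∧
    A = fun a b => ∑ i, (p i : ℂ) *
      ((∏ j, x i j (a j)) * ∏ j, (starRingEnd ℂ) (x i j (b j)))

namespace VN
variable {k : ℕ}

def toE (x : Fin k → ℂ) : EuclideanSpace ℂ (Fin k) := (WithLp.equiv 2 _).symm x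

lemma vnorm_eq (x : Fin k → ℂ) : vnorm x = ‖toE x‖ := by
  rw [EuclideanSpace.norm_eq]; rfl

lemma vnorm_nonneg (x : Fin k → ℂ) : 0 ≤ vnorm x := Real.sqrt_nonneg _

lemma vnorm_eq_zero {x : Fin k → ℂ} : vnorm x = 0 ↔ x = 0 := by
  rw [vnorm_eq, norm_eq_zero]
  constructor
  · intro h; funext i; exact congrFun (congrArg WithLp.ofLp h) i
  · intro h; subst h; rfl

lemma vnorm_smul (c : ℂ) (x : Fin k → ℂ) : vnorm (fun i => c * x i) = ‖c‖ * vnorm x := by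
  have : toE (fun i => c * x i) = c • toE x := rfl
  rw [vnorm_eq, this, norm_smul, vnorm_eq]

lemma vnorm_conj (x : Fin k → ℂ) : vnorm (fun i => (starRingEnd ℂ) (x i)) = vnorm x := by
  unfold vnorm; congr 1; apply Finset.sum_congr rfl; intro i _; rw [RCLike.norm_conj]

lemma inner_toE (x y : Fin k → ℂ) :
    (inner ℂ (toE fun i => (starRingEnd ℂ) (x i)) (toE y) : ℂ) = ∑ i, x i * y i := by
  rw [PiLp.inner_apply]
  apply Finset.sum_congr rfl
  intro i _
  simp [toE, RCLike.inner_apply, mul_comm]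

lemma norm_toE_conj (x : Fin k → ℂ) :
    ‖toE fun i => (starRingEnd ℂ) (x i)‖ = vnorm x := by
  rw [← vnorm_eq, vnorm_conj]

lemma cs_le (x y : Fin k → ℂ) : ‖∑ i, x i * y i‖ ≤ vnorm x * vnorm y := by
  rw [← inner_toE, ← norm_toE_conj x, vnorm_eq y]
  exact norm_inner_le_norm _ _

lemma cs_eq {x y : Fin k → ℂ} (hx : x ≠ 0)
    (h : ‖∑ i, x i * y i‖ = vnorm x * vnorm y) :
    ∃ c : ℂ, y = fun i => c * (starRingEnd ℂ) (x i) := by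
  by_cases hy : y = 0
  · exact ⟨0, by subst hy; funext i; simp⟩
  · have hx' : toE (fun i => (starRingEnd ℂ) (x i)) ≠ 0 := by
      intro h0
      apply hx
      funext i
      have := congrFun (congrArg WithLp.ofLp h0) i
      simpa [toE] using this
    have hy' : toE y ≠ 0 := by
      intro h0; apply hy; funext i; exact congrFun (congrArg WithLp.ofLp h0) i
    have h2 : ‖(inner ℂ (toE fun i => (starRingEnd ℂ) (x i)) (toE y) : ℂ)‖
        = ‖toE fun i => (starRingEnd ℂ) (x i)‖ * ‖toE y‖ := by
      rw [inner_toE, h, norm_toE_conj, vnorm_eq y]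
    obtain ⟨r, _, hr⟩ := (norm_inner_eq_norm_iff hx' hy').1 h2
    refine ⟨r, ?_⟩
    funext i
    have := congrFun (congrArg WithLp.ofLp hr) i
    simpa [toE, mul_comm] using this
end VN

namespace VN
variable {d : ℕ} {n : Fin d → ℕ}

/-- the decomposition set -/
def DSet {d : ℕ} (n : Fin d → ℕ) (A : MIdx d n → MIdx d n → ℂ) : Set ℝ :=
  {r : ℝ | ∃ (m : ℕ) (x y : Fin m → ∀ j, Fin (n j) → ℂ),
    A = (fun p q => ∑ i, (∏ j, x i j (p j)) * (∏ j, y i j (q j))) ∧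
    r = ∑ i, (∏ j, vnorm (x i j)) * (∏ j, vnorm (y i j))}

lemma nucNorm2_eq (A : MIdx d n → MIdx d n → ℂ) : nucNorm2 A = sInf (DSet n A) := rfl

lemma DSet_nonneg (A : MIdx d n → MIdx d n → ℂ) {r : ℝ} (hr : r ∈ DSet n A) : 0 ≤ r := by
  obtain ⟨m, x, y, -, rfl⟩ := hr
  apply Finset.sum_nonneg
  intro i _
  apply mul_nonneg <;> exact Finset.prod_nonneg fun j _ => vnorm_nonneg _

lemma DSet_bddBelow (A : MIdx d n → MIdx d n → ℂ) : BddBelow (DSet n A) :=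
  ⟨0, fun r hr => DSet_nonneg A hr⟩

/-- trace of a decomposition -/
lemma trace_decomp (m : ℕ) (x y : Fin m → ∀ j, Fin (n j) → ℂ) :
    traceT (fun p q : MIdx d n => ∑ i, (∏ j, x i j (p j)) * (∏ j, y i j (q j)))
      = ∑ i, ∏ j, ∑ a, x i j a * y i j a := by
  unfold traceT
  rw [Finset.sum_comm]
  apply Finset.sum_congr rfl
  intro i _
  rw [Finset.prod_univ_sum]
  rw [Fintype.piFinset_univ]
  apply Finset.sum_congr rfl
  intro p _
  rw [← Finset.prod_mul_distrib]

/-- any decomposition of a trace-one tensor has cost at least 1 -/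
lemma one_le_cost {A : MIdx d n → MIdx d n → ℂ} (htr : traceT A = 1)
    {r : ℝ} (hr : r ∈ DSet n A) : 1 ≤ r := by
  obtain ⟨m, x, y, hxy, rfl⟩ := hr
  have h1 : (1 : ℂ) = ∑ i, ∏ j, ∑ a, x i j a * y i j a := by
    rw [← htr, hxy, trace_decomp]
  have : (1 : ℝ) = ‖(1 : ℂ)‖ := by simp
  rw [this, h1]
  calc ‖∑ i, ∏ j, ∑ a, x i j a * y i j a‖
      ≤ ∑ i, ‖∏ j, ∑ a, x i j a * y i j a‖ := norm_sum_le _ _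
    _ ≤ ∑ i, (∏ j, vnorm (x i j)) * (∏ j, vnorm (y i j)) := by
        apply Finset.sum_le_sum
        intro i _
        rw [norm_prod, ← Finset.prod_mul_distrib]
        apply Finset.prod_le_prod
        · intro j _; exact norm_nonneg _
        · intro j _; exact cs_le _ _
end VN

namespace VN
variable {d : ℕ} {n : Fin d → ℕ}

lemma prod_ite_delta (hd : 1 ≤ d) (P : MIdx d n) (c : ℂ) (p : MIdx d n) :
    (∏ j, (if p j = P j then (if j = (⟨0, hd⟩ : Fin d) then c else 1) else 0))
      = if p = P then c else 0 := by
  by_cases h : p = P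
  · subst h
    simp only [if_pos rfl, if_pos]
    rw [Finset.prod_ite_eq' Finset.univ (⟨0, hd⟩ : Fin d) (fun _ => c)]
    simp
  · obtain ⟨j, hj⟩ : ∃ j, p j ≠ P j := by
      by_contra hc
      push_neg at hc
      exact h (funext hc)
    rw [if_neg h]
    exact Finset.prod_eq_zero (Finset.mem_univ j) (by rw [if_neg hj])

lemma DSet_nonempty (hd : 1 ≤ d) (A : MIdx d n → MIdx d n → ℂ) : (DSet n A).Nonempty := by
  classical
  set m := Fintype.card (MIdx d n × MIdx d n) with hm
  set e := (Fintype.equivFin (MIdx d n × MIdx d n)).symm with he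
  refine ⟨_, m, fun i j a => if a = (e i).1 j then (if j = (⟨0, hd⟩ : Fin d)
      then A (e i).1 (e i).2 else 1) else 0,
    fun i j a => if a = (e i).2 j then (if j = (⟨0, hd⟩ : Fin d) then 1 else 1) else 0, ?_, rfl⟩
  funext p q
  have key : ∀ i : Fin m,
      (∏ j, (if p j = (e i).1 j then (if j = (⟨0, hd⟩ : Fin d)
          then A (e i).1 (e i).2 else 1) else 0)) *
      (∏ j, (if q j = (e i).2 j then (if j = (⟨0, hd⟩ : Fin d) then 1 else 1) else 0))
        = if (p, q) = e i then A (e i).1 (e i).2 else 0 := by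
    intro i
    rw [prod_ite_delta hd ((e i).1) (A (e i).1 (e i).2) p,
      prod_ite_delta hd ((e i).2) 1 q]
    by_cases h1 : p = (e i).1 <;> by_cases h2 : q = (e i).2
    · subst h1; subst h2; simp
    · simp [h2, Prod.ext_iff, h1]
    · simp [h1, Prod.ext_iff]
    · simp [h1, h2, Prod.ext_iff]
  rw [show (∑ i : Fin m, (∏ j, (if p j = (e i).1 j then (if j = (⟨0, hd⟩ : Fin d)
          then A (e i).1 (e i).2 else 1) else 0)) *
      (∏ j, (if q j = (e i).2 j then (if j = (⟨0, hd⟩ : Fin d) then 1 else 1) else 0)))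
      = ∑ i : Fin m, if (p, q) = e i then A (e i).1 (e i).2 else 0 from
    Finset.sum_congr rfl fun i _ => key i]
  rw [Equiv.sum_comp e (fun z => if (p,q) = z then A z.1 z.2 else 0)]
  simp

end VN

namespace VN
variable {d : ℕ} {n : Fin d → ℕ}

lemma one_mem_DSet_of_sep (hd : 1 ≤ d) {A : MIdx d n → MIdx d n → ℂ}
    (hA : Separable A) : (1 : ℝ) ∈ DSet n A := by
  classical
  obtain ⟨r, p, x, hunit, hp0, hp1, hAeq⟩ := hA
  set j0 : Fin d := ⟨0, hd⟩ with hj0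
  refine ⟨r, fun i j a => (if j = j0 then (p i : ℂ) else 1) * x i j a,
    fun i j a => (starRingEnd ℂ) (x i j a), ?_, ?_⟩
  · rw [hAeq]
    funext a b
    apply Finset.sum_congr rfl
    intro i _
    rw [Finset.prod_mul_distrib, Finset.prod_ite_eq' Finset.univ j0 (fun _ => (p i : ℂ))]
    simp [mul_assoc]
  · rw [← hp1]
    apply Finset.sum_congr rfl
    intro i _
    have h1 : ∀ j, vnorm (fun a => (if j = j0 then (p i : ℂ) else 1) * x i j a)
        = (if j = j0 then |p i| else 1) := by
      intro j
      rw [vnorm_smul, hunit i j, mul_one]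
      by_cases h : j = j0 <;> simp [h]
    have h2 : ∀ j, vnorm (fun a => (starRingEnd ℂ) (x i j a)) = 1 := by
      intro j; rw [vnorm_conj, hunit i j]
    rw [Finset.prod_congr rfl (fun j _ => h1 j), Finset.prod_congr rfl (fun j _ => h2 j),
      Finset.prod_ite_eq' Finset.univ j0 (fun _ => |p i|)]
    simp [abs_of_nonneg (hp0 i)]

lemma one_le_nucNorm2 (hd : 1 ≤ d) {A : MIdx d n → MIdx d n → ℂ} (htr : traceT A = 1) :
    1 ≤ nucNorm2 A := by
  rw [nucNorm2_eq]
  exact le_csInf (DSet_nonempty hd A) fun r hr => one_le_cost htr hr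

lemma nucNorm2_eq_one_of_sep (hd : 1 ≤ d) {A : MIdx d n → MIdx d n → ℂ}
    (htr : traceT A = 1) (hA : Separable A) : nucNorm2 A = 1 := by
  refine le_antisymm ?_ (one_le_nucNorm2 hd htr)
  rw [nucNorm2_eq]
  exact csInf_le (DSet_bddBelow A) (one_mem_DSet_of_sep hd hA)

end VN

namespace VN

lemma sum_extend {β : Type*} [AddCommMonoid β] {a b : ℕ} (h : a ≤ b) (F : Fin a → β) :
    (∑ i : Fin b, if hi : (i : ℕ) < a then F ⟨i, hi⟩ else 0) = ∑ j : Fin a, F j := by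
  set g : ℕ → β := fun i => if hi : i < a then F ⟨i, hi⟩ else 0 with hg
  calc (∑ i : Fin b, if hi : (i : ℕ) < a then F ⟨i, hi⟩ else 0)
      = ∑ i ∈ Finset.range b, g i := Fin.sum_univ_eq_sum_range g b
    _ = ∑ i ∈ Finset.range a, g i := by
        refine (Finset.sum_subset (Finset.range_subset_range.2 h) fun x _ hx => ?_).symm
        rw [Finset.mem_range] at hx
        exact dif_neg hx
    _ = ∑ j : Fin a, g j := (Fin.sum_univ_eq_sum_range g a).symm
    _ = ∑ j : Fin a, F j := Finset.sum_congr rfl fun j _ => by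
        rw [hg]; simp only [Fin.is_lt, dif_pos, Fin.eta]

variable {E : Type*} [NormedAddCommGroup E] [NormedSpace ℝ E] [FiniteDimensional ℝ E]

theorem isCompact_convexHull' {s : Set E} (hs : IsCompact s) :
    IsCompact (convexHull ℝ s) := by
  classical
  rcases s.eq_empty_or_nonempty with rfl | ⟨z0, hz0⟩
  · rw [convexHull_empty]; exact isCompact_empty
  set D := Module.finrank ℝ E + 1 with hD
  set f : (Fin D → ℝ) × (Fin D → E) → E := fun wz => ∑ i, wz.1 i • wz.2 i with hf
  have hfc : Continuous f := by
    apply continuous_finset_sum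
    intro i _
    exact ((continuous_apply i).comp continuous_fst).smul
      ((continuous_apply i).comp continuous_snd)
  have hC : IsCompact ((stdSimplex ℝ (Fin D)) ×ˢ (Set.univ.pi fun _ : Fin D => s)) :=
    (isCompact_stdSimplex _ _).prod (isCompact_univ_pi fun _ => hs)
  have heq : convexHull ℝ s = f '' ((stdSimplex ℝ (Fin D)) ×ˢ (Set.univ.pi fun _ => s)) := by
    apply Set.Subset.antisymm
    · intro u hu
      rw [convexHull_eq_union] at hu
      obtain ⟨t, hut⟩ := Set.mem_iUnion.1 hu
      obtain ⟨ht, hut⟩ := Set.mem_iUnion.1 hut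
      obtain ⟨hai', hut⟩ := Set.mem_iUnion.1 hut
      rw [Finset.convexHull_eq] at hut
      obtain ⟨w, hw0, hw1, hwc⟩ := hut
      have hcard : t.card ≤ D := by
        have h1 := hai'.card_le_finrank_succ
        rw [Fintype.card_coe] at h1
        exact h1.trans (by
          have := Submodule.finrank_le (vectorSpan ℝ (Set.range ((↑) : ↥t → E)))
          omega)
      set e : Fin t.card ≃ ↥t := t.equivFin.symm with he
      set w' : Fin D → ℝ := fun i => if hi : (i : ℕ) < t.card then w (e ⟨i, hi⟩) else 0 with hw'
      set z' : Fin D → E := fun i => if hi : (i : ℕ) < t.card then (e ⟨i, hi⟩ : E) else z0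
        with hz'
      refine ⟨(w', z'), ⟨⟨?_, ?_⟩, ?_⟩, ?_⟩
      · intro i
        rw [hw']
        dsimp only
        split
        · exact hw0 _ (Finset.coe_mem _)
        · exact le_refl 0
      · have : ∀ i : Fin D, w' i = if hi : (i : ℕ) < t.card
            then (fun j : Fin t.card => w (e j)) ⟨i, hi⟩ else 0 := fun i => rfl
        rw [Finset.sum_congr rfl fun i _ => this i,
          sum_extend hcard (fun j : Fin t.card => w (e j))]
        rw [Equiv.sum_comp e (fun y : ↥t => w (y : E)), Finset.sum_coe_sort t w]
        exact hw1
      · intro i _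
        rw [hz']
        dsimp only
        split
        · exact ht (Finset.coe_mem _)
        · exact hz0
      · rw [t.centerMass_eq_of_sum_1 _ hw1] at hwc
        rw [hf]
        dsimp only
        have : ∀ i : Fin D, w' i • z' i = if hi : (i : ℕ) < t.card
            then (fun j : Fin t.card => w (e j) • (e j : E)) ⟨i, hi⟩ else 0 := by
          intro i
          rw [hw', hz']
          dsimp only
          split
          · rfl
          · rw [zero_smul]
        rw [Finset.sum_congr rfl fun i _ => this i,
          sum_extend hcard (fun j : Fin t.card => w (e j) • ((e j : E))),
          Equiv.sum_comp e (fun y : ↥t => w (y : E) • (y : E)),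
          Finset.sum_coe_sort t (fun y => w y • y)]
        rw [← hwc]
        apply Finset.sum_congr rfl
        intro y _
        rfl
    · rintro u ⟨⟨w, z⟩, ⟨⟨hw0, hw1⟩, hz⟩, rfl⟩
      apply (convex_convexHull ℝ s).sum_mem (fun i _ => hw0 i) hw1
      intro i _
      exact subset_convexHull ℝ s (hz i (Set.mem_univ i))
  rw [heq]
  exact hC.image hfc

end VN

namespace VN

lemma isCompact_vball (k : ℕ) : IsCompact {v : Fin k → ℂ | vnorm v ≤ 1} := by
  have L := PiLp.continuousLinearEquiv 2 ℂ (fun _ : Fin k => ℂ)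
  have : {v : Fin k → ℂ | vnorm v ≤ 1}
      = (PiLp.continuousLinearEquiv 2 ℂ (fun _ : Fin k => ℂ)) '' (Metric.closedBall 0 1) := by
    ext v
    constructor
    · intro hv
      refine ⟨toE v, ?_, rfl⟩
      rw [Metric.mem_closedBall, dist_zero_right, ← vnorm_eq]
      exact hv
    · rintro ⟨u, hu, rfl⟩
      rw [Metric.mem_closedBall, dist_zero_right] at hu
      have hv : vnorm ((PiLp.continuousLinearEquiv 2 ℂ (fun _ : Fin k => ℂ)) u) = ‖u‖ := by
        rw [vnorm_eq]; rfl
      exact hv.trans_le hu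
  rw [this]
  exact (isCompact_closedBall _ _).image (PiLp.continuousLinearEquiv 2 ℂ _).continuous

variable {d : ℕ} {n : Fin d → ℕ}

def Phi (z : (∀ j, Fin (n j) → ℂ) × (∀ j, Fin (n j) → ℂ)) :
    MIdx d n → MIdx d n → ℂ :=
  fun p q => (∏ j, z.1 j (p j)) * (∏ j, z.2 j (q j))

def TSet (d : ℕ) (n : Fin d → ℕ) : Set ((∀ j, Fin (n j) → ℂ) × (∀ j, Fin (n j) → ℂ)) :=
  {z | (∀ j, vnorm (z.1 j) ≤ 1) ∧ (∀ j, vnorm (z.2 j) ≤ 1)}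

def KSet (d : ℕ) (n : Fin d → ℕ) : Set (MIdx d n → MIdx d n → ℂ) := Phi '' TSet d n

lemma isCompact_TSet : IsCompact (TSet d n) := by
  have h1 : IsCompact ((Set.univ.pi fun j => {v : Fin (n j) → ℂ | vnorm v ≤ 1}) ×ˢ
      (Set.univ.pi fun j => {v : Fin (n j) → ℂ | vnorm v ≤ 1})) :=
    (isCompact_univ_pi fun j => isCompact_vball (n j)).prod
      (isCompact_univ_pi fun j => isCompact_vball (n j))
  have : TSet d n = (Set.univ.pi fun j => {v : Fin (n j) → ℂ | vnorm v ≤ 1}) ×ˢ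
      (Set.univ.pi fun j => {v : Fin (n j) → ℂ | vnorm v ≤ 1}) := by
    ext z
    simp only [TSet, Set.mem_setOf_eq, Set.mem_prod, Set.mem_pi, Set.mem_univ, true_implies,
      Set.mem_setOf_eq]
  rw [this]
  exact h1

lemma continuous_Phi : Continuous (Phi (d := d) (n := n)) := by
  apply continuous_pi; intro p
  apply continuous_pi; intro q
  apply Continuous.mul
  · apply continuous_finset_prod
    intro j _
    exact (continuous_apply (p j)).comp ((continuous_apply j).comp continuous_fst)
  · apply continuous_finset_prod
    intro j _
    exact (continuous_apply (q j)).comp ((continuous_apply j).comp continuous_snd)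

lemma isCompact_KSet : IsCompact (KSet d n) :=
  isCompact_TSet.image continuous_Phi

lemma zero_mem_KSet (hd : 1 ≤ d) : (0 : MIdx d n → MIdx d n → ℂ) ∈ KSet d n := by
  refine ⟨(0, 0), ⟨fun j => ?_, fun j => ?_⟩, ?_⟩
  · show vnorm (0 : Fin (n j) → ℂ) ≤ 1
    rw [vnorm_eq_zero.2 rfl]; norm_num
  · show vnorm (0 : Fin (n j) → ℂ) ≤ 1
    rw [vnorm_eq_zero.2 rfl]; norm_num
  · funext p q
    have h0 : (∏ j, (0 : ∀ j, Fin (n j) → ℂ) j (p j)) = 0 :=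
      Finset.prod_eq_zero (Finset.mem_univ (⟨0, hd⟩ : Fin d)) rfl
    show (∏ j, (0 : ∀ j, Fin (n j) → ℂ) j (p j)) * (∏ j, (0 : ∀ j, Fin (n j) → ℂ) j (q j))
        = (0 : MIdx d n → MIdx d n → ℂ) p q
    rw [h0, zero_mul]
    rfl

end VN

namespace VN
variable {d : ℕ} {n : Fin d → ℕ}

lemma prod_inv_cast (v : Fin d → ℝ) :
    (∏ j, (((v j)⁻¹ : ℝ) : ℂ)) = ((∏ j, v j : ℝ) : ℂ)⁻¹ := by
  push_cast
  rw [← Finset.prod_inv_distrib]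

lemma mem_hull_of_decomp (hd : 1 ≤ d) (m : ℕ) (x y : Fin m → ∀ j, Fin (n j) → ℂ)
    (hcost : (∑ i, (∏ j, vnorm (x i j)) * ∏ j, vnorm (y i j)) ≤ 1) :
    (fun p q : MIdx d n => ∑ i, (∏ j, x i j (p j)) * ∏ j, y i j (q j))
      ∈ convexHull ℝ (KSet d n) := by
  classical
  set c : Fin m → ℝ := fun i => (∏ j, vnorm (x i j)) * ∏ j, vnorm (y i j) with hc
  have hc0 : ∀ i, 0 ≤ c i := fun i =>
    mul_nonneg (Finset.prod_nonneg fun j _ => vnorm_nonneg _)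
      (Finset.prod_nonneg fun j _ => vnorm_nonneg _)
  set kk : Fin m → (MIdx d n → MIdx d n → ℂ) := fun i =>
    if h : c i = 0 then 0 else
      Phi (fun j a => (((vnorm (x i j))⁻¹ : ℝ) : ℂ) * x i j a,
           fun j a => (((vnorm (y i j))⁻¹ : ℝ) : ℂ) * y i j a) with hkk
  have hvpos : ∀ i, c i ≠ 0 → (∀ j, 0 < vnorm (x i j)) ∧ ∀ j, 0 < vnorm (y i j) := by
    intro i hci
    rcases mul_ne_zero_iff.1 hci with ⟨h1, h2⟩
    constructor <;> intro j
    · refine lt_of_le_of_ne (vnorm_nonneg _) (Ne.symm ?_)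
      intro h0
      exact h1 (Finset.prod_eq_zero (Finset.mem_univ j) h0)
    · refine lt_of_le_of_ne (vnorm_nonneg _) (Ne.symm ?_)
      intro h0
      exact h2 (Finset.prod_eq_zero (Finset.mem_univ j) h0)
  have hkK : ∀ i, kk i ∈ KSet d n := by
    intro i
    rw [hkk]
    dsimp only
    split
    · exact zero_mem_KSet hd
    · rename_i h
      obtain ⟨hx, hy⟩ := hvpos i h
      refine ⟨_, ⟨fun j => ?_, fun j => ?_⟩, rfl⟩
      · rw [vnorm_smul, Complex.norm_real, Real.norm_eq_abs,
          abs_of_nonneg (inv_nonneg.2 (hx j).le), inv_mul_cancel₀ (hx j).ne']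
      · rw [vnorm_smul, Complex.norm_real, Real.norm_eq_abs,
          abs_of_nonneg (inv_nonneg.2 (hy j).le), inv_mul_cancel₀ (hy j).ne']
  have hterm : ∀ i, c i • kk i
      = fun p q : MIdx d n => (∏ j, x i j (p j)) * ∏ j, y i j (q j) := by
    intro i
    by_cases h : c i = 0
    · rw [h, zero_smul]
      funext p q
      have hz : (∏ j, x i j (p j)) * ∏ j, y i j (q j) = 0 := by
        rcases mul_eq_zero.1 h with h1 | h1
        · obtain ⟨j, -, hj⟩ := Finset.prod_eq_zero_iff.1 h1
          have hx0 : x i j (p j) = 0 := congrFun (vnorm_eq_zero.1 hj) (p j)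
          rw [Finset.prod_eq_zero (Finset.mem_univ j) hx0, zero_mul]
        · obtain ⟨j, -, hj⟩ := Finset.prod_eq_zero_iff.1 h1
          have hy0 : y i j (q j) = 0 := congrFun (vnorm_eq_zero.1 hj) (q j)
          rw [show (∏ j, y i j (q j)) = 0 from Finset.prod_eq_zero (Finset.mem_univ j) hy0,
            mul_zero]
      rw [hz]
      rfl
    · obtain ⟨hx, hy⟩ := hvpos i h
      funext p q
      rw [hkk]
      dsimp only
      rw [dif_neg h]
      show c i • ((∏ j, (((vnorm (x i j))⁻¹ : ℝ) : ℂ) * x i j (p j)) *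
          (∏ j, (((vnorm (y i j))⁻¹ : ℝ) : ℂ) * y i j (q j))) = _
      rw [Finset.prod_mul_distrib, Finset.prod_mul_distrib,
        prod_inv_cast (fun j => vnorm (x i j)), prod_inv_cast (fun j => vnorm (y i j))]
      have hcx : ((∏ j, vnorm (x i j) : ℝ) : ℂ) ≠ 0 := by
        simp only [ne_eq, Complex.ofReal_eq_zero]
        exact (Finset.prod_pos (fun j _ => hx j)).ne'
      have hcy : ((∏ j, vnorm (y i j) : ℝ) : ℂ) ≠ 0 := by
        simp only [ne_eq, Complex.ofReal_eq_zero]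
        exact (Finset.prod_pos (fun j _ => hy j)).ne'
      have hcast : (c i : ℂ) = ((∏ j, vnorm (x i j) : ℝ) : ℂ)
          * ((∏ j, vnorm (y i j) : ℝ) : ℂ) := by
        rw [hc]; push_cast; ring
      show (c i : ℝ) • _ = _
      rw [Complex.real_smul, hcast]
      have key : ∀ a b u v : ℂ, a ≠ 0 → b ≠ 0 →
          (a * b) * ((a⁻¹ * u) * (b⁻¹ * v)) = u * v := by
        intro a b u v ha hb
        field_simp
      exact key _ _ _ _ hcx hcy
  have hsum : (fun p q : MIdx d n => ∑ i, (∏ j, x i j (p j)) * ∏ j, y i j (q j))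
      = ∑ i : Fin m, c i • kk i := by
    funext p q
    have h1 : (∑ i : Fin m, c i • kk i) p q = ∑ i : Fin m, (c i • kk i) p q := by
      rw [Finset.sum_apply]
      rw [Finset.sum_apply]
    rw [h1]
    exact Finset.sum_congr rfl fun i _ => (congrFun (congrFun (hterm i) p) q)|>.symm
  rw [hsum]
  have hsnoc : ∑ i : Fin m, c i • kk i
      = ∑ i : Fin (m + 1), (Fin.snoc c (1 - ∑ i, c i) : Fin (m + 1) → ℝ) i •
          (Fin.snoc kk 0 : Fin (m + 1) → MIdx d n → MIdx d n → ℂ) i := by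
    rw [Fin.sum_univ_castSucc]
    simp only [Fin.snoc_castSucc, Fin.snoc_last, smul_zero, add_zero]
  rw [hsnoc]
  apply (convex_convexHull ℝ (KSet d n)).sum_mem
  · intro i _
    refine Fin.lastCases ?_ (fun j => ?_) i
    · rw [Fin.snoc_last]
      linarith
    · rw [Fin.snoc_castSucc]
      exact hc0 j
  · rw [Fin.sum_univ_castSucc]
    simp only [Fin.snoc_castSucc, Fin.snoc_last]
    ring
  · intro i _
    refine Fin.lastCases ?_ (fun j => ?_) i
    · rw [Fin.snoc_last]
      exact subset_convexHull _ _ (zero_mem_KSet hd)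
    · rw [Fin.snoc_castSucc]
      exact subset_convexHull _ _ (hkK j)

end VN

namespace VN
variable {d : ℕ} {n : Fin d → ℕ}

lemma exists_decomp_le_one (hd : 1 ≤ d) {A : MIdx d n → MIdx d n → ℂ}
    (hA : A ∈ convexHull ℝ (KSet d n)) : ∃ r ∈ DSet n A, r ≤ 1 := by
  classical
  rw [convexHull_eq] at hA
  obtain ⟨ι, t, w, z, hw0, hw1, hz, hcm⟩ := hA
  rw [t.centerMass_eq_of_sum_1 _ hw1] at hcm
  have hch : ∀ i : {i // i ∈ t}, ∃ a, a ∈ TSet d n ∧ Phi a = z i.1 :=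
    fun i => hz i.1 i.2
  choose g hgT hgP using hch
  set e : Fin t.card ≃ {i // i ∈ t} := t.equivFin.symm with he
  set j0 : Fin d := ⟨0, hd⟩ with hj0
  set X : Fin t.card → ∀ j, Fin (n j) → ℂ := fun i j a =>
    (if j = j0 then ((w (e i).1 : ℝ) : ℂ) else 1) * (g (e i)).1 j a with hX
  set Y : Fin t.card → ∀ j, Fin (n j) → ℂ := fun i => (g (e i)).2 with hY
  refine ⟨_, ⟨t.card, X, Y, ?_, rfl⟩, ?_⟩
  · funext p q
    have h1 : A p q = ∑ i ∈ t, (w i : ℂ) * z i p q := by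
      rw [← hcm]
      rw [Finset.sum_apply]
      rw [Finset.sum_apply]
      apply Finset.sum_congr rfl
      intro i _
      show (w i • z i) p q = _
      rw [Pi.smul_apply, Pi.smul_apply, Complex.real_smul]
    rw [h1, ← Finset.sum_coe_sort t (fun i => (w i : ℂ) * z i p q),
      ← Equiv.sum_comp e (fun i : {i // i ∈ t} => (w i.1 : ℂ) * z i.1 p q)]
    apply Finset.sum_congr rfl
    intro i _
    rw [← hgP (e i)]
    show (w (e i).1 : ℂ) * ((∏ j, (g (e i)).1 j (p j)) * ∏ j, (g (e i)).2 j (q j)) = _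
    rw [hX]
    dsimp only
    rw [Finset.prod_mul_distrib, Finset.prod_ite_eq' Finset.univ j0
      (fun _ => ((w (e i).1 : ℝ) : ℂ))]
    simp only [Finset.mem_univ, if_true]
    rw [hY]
    ring
  · have hle : ∀ i : Fin t.card,
        (∏ j, vnorm (X i j)) * ∏ j, vnorm (Y i j) ≤ w (e i).1 := by
      intro i
      have hwnn : 0 ≤ w (e i).1 := hw0 _ (e i).2
      have hX1 : (∏ j, vnorm (X i j)) ≤ w (e i).1 := by
        have : ∀ j, vnorm (X i j)
            = (if j = j0 then |w (e i).1| else 1) * vnorm ((g (e i)).1 j) := by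
          intro j
          rw [hX]
          dsimp only
          rw [vnorm_smul]
          by_cases hj : j = j0 <;> simp [hj, Complex.norm_real]
        rw [Finset.prod_congr rfl fun j _ => this j, Finset.prod_mul_distrib,
          Finset.prod_ite_eq' Finset.univ j0 (fun _ => |w (e i).1|)]
        simp only [Finset.mem_univ, if_true]
        rw [abs_of_nonneg hwnn]
        calc w (e i).1 * ∏ j, vnorm ((g (e i)).1 j)
            ≤ w (e i).1 * 1 := by
              apply mul_le_mul_of_nonneg_left _ hwnn
              exact Finset.prod_le_one (fun j _ => vnorm_nonneg _)
                (fun j _ => (hgT (e i)).1 j)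
          _ = w (e i).1 := mul_one _
      have hY1 : (∏ j, vnorm (Y i j)) ≤ 1 := by
        rw [hY]
        exact Finset.prod_le_one (fun j _ => vnorm_nonneg _) (fun j _ => (hgT (e i)).2 j)
      calc (∏ j, vnorm (X i j)) * ∏ j, vnorm (Y i j)
          ≤ w (e i).1 * 1 := by
            apply mul_le_mul hX1 hY1 (Finset.prod_nonneg fun j _ => vnorm_nonneg _)
              hwnn
        _ = w (e i).1 := mul_one _
    calc (∑ i, (∏ j, vnorm (X i j)) * ∏ j, vnorm (Y i j))
        ≤ ∑ i, w (e i).1 := Finset.sum_le_sum fun i _ => hle i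
      _ = ∑ i ∈ t, w i := by
          rw [Equiv.sum_comp e (fun i : {i // i ∈ t} => w i.1), Finset.sum_coe_sort t w]
      _ = 1 := hw1

end VN

namespace VN
variable {d : ℕ} {n : Fin d → ℕ}

lemma mem_hull_of_nucNorm_eq_one (hd : 1 ≤ d) {A : MIdx d n → MIdx d n → ℂ}
    (h1 : nucNorm2 A = 1) : A ∈ convexHull ℝ (KSet d n) := by
  classical
  have hcl : IsClosed (convexHull ℝ (KSet d n)) :=
    (isCompact_convexHull' isCompact_KSet).isClosed
  have hmem : ∀ k : ℕ, ((1 + (1 : ℝ)/(k+1))⁻¹) • A ∈ convexHull ℝ (KSet d n) := by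
    intro k
    have hεpos : (0 : ℝ) < 1/(k+1) := by positivity
    have hkpos : (0 : ℝ) < 1 + 1/(k+1) := by positivity
    set s : ℝ := (1 + (1 : ℝ)/(k+1))⁻¹ with hs
    have hspos : 0 < s := inv_pos.2 hkpos
    have hlt : sInf (DSet n A) < 1 + 1/(k+1) := by
      rw [← nucNorm2_eq, h1]
      linarith
    obtain ⟨r, hr, hrlt⟩ := (csInf_lt_iff (DSet_bddBelow A) (DSet_nonempty hd A)).1 hlt
    have hr0 : 0 ≤ r := DSet_nonneg A hr
    obtain ⟨m, x, y, hAeq, hreq⟩ := hr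
    set j0 : Fin d := ⟨0, hd⟩ with hj0
    set X : Fin m → ∀ j, Fin (n j) → ℂ := fun i j a =>
      (if j = j0 then ((s : ℝ) : ℂ) else 1) * x i j a with hXdef
    have hprodX : ∀ (i : Fin m) (p : MIdx d n),
        (∏ j, X i j (p j)) = (s : ℂ) * ∏ j, x i j (p j) := by
      intro i p
      rw [hXdef]
      dsimp only
      rw [Finset.prod_mul_distrib, Finset.prod_ite_eq' Finset.univ j0 (fun _ => ((s : ℝ) : ℂ))]
      simp only [Finset.mem_univ, if_true]
    have hvX : ∀ (i : Fin m) (j : Fin d), vnorm (X i j)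
        = (if j = j0 then s else 1) * vnorm (x i j) := by
      intro i j
      rw [hXdef]
      dsimp only
      rw [vnorm_smul]
      by_cases hj : j = j0 <;>
        simp [hj, Complex.norm_real, abs_of_nonneg hspos.le]
    have hcost : (∑ i, (∏ j, vnorm (X i j)) * ∏ j, vnorm (y i j)) ≤ 1 := by
      have heach : ∀ i : Fin m, (∏ j, vnorm (X i j)) * ∏ j, vnorm (y i j)
          = s * ((∏ j, vnorm (x i j)) * ∏ j, vnorm (y i j)) := by
        intro i
        rw [Finset.prod_congr rfl fun j _ => hvX i j, Finset.prod_mul_distrib,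
          Finset.prod_ite_eq' Finset.univ j0 (fun _ => s)]
        simp only [Finset.mem_univ, if_true]
        ring
      rw [Finset.sum_congr rfl fun i _ => heach i, ← Finset.mul_sum, ← hreq]
      have : s * r < s * (1 + 1/(k+1)) := by
        exact mul_lt_mul_of_pos_left hrlt hspos
      rw [hs] at this ⊢
      rw [inv_mul_cancel₀ hkpos.ne'] at this
      exact this.le
    have hfun : (fun p q : MIdx d n => ∑ i, (∏ j, X i j (p j)) * ∏ j, y i j (q j))
        = s • A := by
      funext p q
      rw [Pi.smul_apply, Pi.smul_apply, Complex.real_smul, hAeq]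
      dsimp only
      rw [Finset.mul_sum]
      apply Finset.sum_congr rfl
      intro i _
      rw [hprodX i p]
      ring
    have := mem_hull_of_decomp hd m X y hcost
    rw [hfun] at this
    exact this
  have htend : Filter.Tendsto (fun k : ℕ => ((1 + (1 : ℝ)/(k+1))⁻¹) • A)
      Filter.atTop (nhds A) := by
    have t0 : Filter.Tendsto (fun k : ℕ => 1 + (1 : ℝ)/(k+1)) Filter.atTop (nhds 1) := by
      have := tendsto_one_div_add_atTop_nhds_zero_nat (𝕜 := ℝ)
      have h2 := Filter.Tendsto.const_add (1 : ℝ) this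
      simpa using h2
    have t1 : Filter.Tendsto (fun k : ℕ => (1 + (1 : ℝ)/(k+1))⁻¹) Filter.atTop (nhds 1) := by
      have := t0.inv₀ (one_ne_zero)
      simpa using this
    have := t1.smul_const A
    simpa using this
  exact hcl.mem_of_tendsto htend (Filter.Eventually.of_forall hmem)

end VN

namespace VN

lemma complex_re_norm_eq {z : ℂ} (h : z.re = ‖z‖) : z = ((‖z‖ : ℝ) : ℂ) := by
  have h2 : ‖z‖^2 = z.re^2 + z.im^2 := by
    rw [Complex.sq_norm, Complex.normSq_apply]; ring
  have him2 : z.im ^ 2 = 0 := by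
    rw [← h] at h2
    linarith
  have him : z.im = 0 := pow_eq_zero_iff two_ne_zero |>.1 him2
  apply Complex.ext
  · rw [Complex.ofReal_re, h]
  · rw [Complex.ofReal_im, him]

lemma vnorm_indicator {k : ℕ} (a0 : Fin k) :
    vnorm (fun a => if a = a0 then (1:ℂ) else 0) = 1 := by
  unfold vnorm
  have h : ∀ a : Fin k, ‖if a = a0 then (1:ℂ) else 0‖^2 = if a = a0 then (1:ℝ) else 0 := by
    intro a; by_cases h : a = a0 <;> simp [h]
  rw [Finset.sum_congr rfl fun a _ => h a, Finset.sum_ite_eq' Finset.univ a0 (fun _ => (1:ℝ))]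
  simp

lemma sum_mul_conj {k : ℕ} (x : Fin k → ℂ) :
    (∑ a, x a * (starRingEnd ℂ) (x a)) = (((vnorm x)^2 : ℝ) : ℂ) := by
  have h1 : ∀ a, x a * (starRingEnd ℂ) (x a) = ((‖x a‖^2 : ℝ) : ℂ) := by
    intro a; rw [Complex.mul_conj']; push_cast; ring
  rw [Finset.sum_congr rfl fun a _ => h1 a, ← Complex.ofReal_sum]
  congr 1
  unfold vnorm
  rw [Real.sq_sqrt (Finset.sum_nonneg fun a _ => sq_nonneg _)]

lemma prod_factor_eq {d : ℕ} {f g : Fin d → ℝ} (hf0 : ∀ j, 0 ≤ f j) (hfg : ∀ j, f j ≤ g j)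
    (hg : ∀ j, 0 < g j) (hprod : ∏ j, f j = ∏ j, g j) : ∀ j, f j = g j := by
  by_contra hcon
  push_neg at hcon
  obtain ⟨j, hj⟩ := hcon
  have hjlt : f j < g j := (hfg j).lt_of_ne hj
  by_cases h0 : ∃ j', f j' = 0
  · obtain ⟨j', hj'⟩ := h0
    rw [Finset.prod_eq_zero (Finset.mem_univ j') hj'] at hprod
    exact absurd hprod.symm (Finset.prod_pos (fun _ _ => hg _)).ne'
  · push_neg at h0
    have := Finset.prod_lt_prod (f := f) (g := g)
      (fun j' _ => (hf0 j').lt_of_ne (Ne.symm (h0 j'))) (fun j' _ => hfg j')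
      ⟨j, Finset.mem_univ j, hjlt⟩
    exact absurd hprod this.ne

variable {d : ℕ} {n : Fin d → ℕ}

lemma sep_of_decomp (hd : 1 ≤ d) (hn : ∀ j, 1 ≤ n j)
    {A : MIdx d n → MIdx d n → ℂ} (htr : traceT A = 1)
    (m : ℕ) (x y : Fin m → ∀ j, Fin (n j) → ℂ)
    (hAeq : A = fun p q => ∑ i, (∏ j, x i j (p j)) * ∏ j, y i j (q j))
    (hcost : (∑ i, (∏ j, vnorm (x i j)) * ∏ j, vnorm (y i j)) ≤ 1) :
    Separable A := by
  classical
  set s : Fin m → Fin d → ℂ := fun i j => ∑ a, x i j a * y i j a with hs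
  set c : Fin m → ℝ := fun i => (∏ j, vnorm (x i j)) * ∏ j, vnorm (y i j) with hc
  have hc0 : ∀ i, 0 ≤ c i := fun i =>
    mul_nonneg (Finset.prod_nonneg fun j _ => vnorm_nonneg _)
      (Finset.prod_nonneg fun j _ => vnorm_nonneg _)
  have hvpos : ∀ i, c i ≠ 0 → (∀ j, 0 < vnorm (x i j)) ∧ ∀ j, 0 < vnorm (y i j) := by
    intro i hci
    rcases mul_ne_zero_iff.1 hci with ⟨h1, h2⟩
    constructor <;> intro j
    · refine lt_of_le_of_ne (vnorm_nonneg _) (Ne.symm ?_)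
      intro h0
      exact h1 (Finset.prod_eq_zero (Finset.mem_univ j) h0)
    · refine lt_of_le_of_ne (vnorm_nonneg _) (Ne.symm ?_)
      intro h0
      exact h2 (Finset.prod_eq_zero (Finset.mem_univ j) h0)
  have htr1 : (∑ i, ∏ j, s i j) = 1 := by
    rw [hAeq] at htr
    rw [trace_decomp m x y] at htr
    exact htr
  have hbc : ∀ i, ‖∏ j, s i j‖ ≤ c i := by
    intro i
    rw [norm_prod, hc]
    dsimp only
    rw [← Finset.prod_mul_distrib]
    exact Finset.prod_le_prod (fun j _ => norm_nonneg _) (fun j _ => cs_le _ _)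
  have hab : ∀ i, (∏ j, s i j).re ≤ ‖∏ j, s i j‖ := fun i => Complex.re_le_norm _
  have hsum_re : (∑ i, (∏ j, s i j).re) = 1 := by
    rw [← Complex.re_sum, htr1, Complex.one_re]
  have h1le : (1 : ℝ) ≤ ∑ i, ‖∏ j, s i j‖ := by
    rw [← hsum_re]
    exact Finset.sum_le_sum fun i _ => hab i
  have hble : (∑ i, ‖∏ j, s i j‖) ≤ ∑ i, c i := Finset.sum_le_sum fun i _ => hbc i
  have hsumb : (∑ i, ‖∏ j, s i j‖) = 1 := le_antisymm (hble.trans hcost) h1le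
  have hsumc : (∑ i, c i) = 1 := le_antisymm hcost (hsumb ▸ hble)
  have heq_bc : ∀ i, ‖∏ j, s i j‖ = c i := by
    have := (Finset.sum_eq_sum_iff_of_le (fun i (_ : i ∈ Finset.univ) => hbc i)).1
      (hsumb.trans hsumc.symm)
    exact fun i => this i (Finset.mem_univ i)
  have heq_ab : ∀ i, (∏ j, s i j).re = ‖∏ j, s i j‖ := by
    have := (Finset.sum_eq_sum_iff_of_le (fun i (_ : i ∈ Finset.univ) => hab i)).1
      (hsum_re.trans hsumb.symm)
    exact fun i => this i (Finset.mem_univ i)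
  set u : ∀ j, Fin (n j) → ℂ := fun j a => if a = (⟨0, hn j⟩ : Fin (n j)) then 1 else 0 with hu
  have hunorm : ∀ j, vnorm (u j) = 1 := fun j => vnorm_indicator _
  set xu : Fin m → ∀ j, Fin (n j) → ℂ := fun i =>
    if h : c i = 0 then u else fun j a => (((vnorm (x i j))⁻¹ : ℝ) : ℂ) * x i j a with hxu
  refine ⟨m, c, xu, ?_, hc0, hsumc, ?_⟩
  · intro i j
    rw [hxu]
    dsimp only
    split
    · exact hunorm j
    · rename_i h
      obtain ⟨hx, -⟩ := hvpos i h
      rw [vnorm_smul, Complex.norm_real, Real.norm_eq_abs,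
        abs_of_nonneg (inv_nonneg.2 (hx j).le), inv_mul_cancel₀ (hx j).ne']
  · rw [hAeq]
    funext a b
    apply Finset.sum_congr rfl
    intro i _
    by_cases h : c i = 0
    · have hz : (∏ j, x i j (a j)) * ∏ j, y i j (b j) = 0 := by
        rcases mul_eq_zero.1 h with h1 | h1
        · obtain ⟨j, -, hj⟩ := Finset.prod_eq_zero_iff.1 h1
          have hx0 : x i j (a j) = 0 := congrFun (vnorm_eq_zero.1 hj) (a j)
          rw [Finset.prod_eq_zero (Finset.mem_univ j) hx0, zero_mul]
        · obtain ⟨j, -, hj⟩ := Finset.prod_eq_zero_iff.1 h1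
          have hy0 : y i j (b j) = 0 := congrFun (vnorm_eq_zero.1 hj) (b j)
          rw [show (∏ j, y i j (b j)) = 0 from Finset.prod_eq_zero (Finset.mem_univ j) hy0,
            mul_zero]
      rw [hz, h]
      simp
    · obtain ⟨hx, hy⟩ := hvpos i h
      have hfac : ∀ j, ‖s i j‖ = vnorm (x i j) * vnorm (y i j) := by
        apply prod_factor_eq (f := fun j => ‖s i j‖)
          (g := fun j => vnorm (x i j) * vnorm (y i j))
          (fun j => norm_nonneg _) (fun j => cs_le _ _)
          (fun j => mul_pos (hx j) (hy j))
        calc (∏ j, ‖s i j‖) = ‖∏ j, s i j‖ := (norm_prod _ _).symm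
          _ = c i := heq_bc i
          _ = ∏ j, (vnorm (x i j) * vnorm (y i j)) := by
              rw [hc, Finset.prod_mul_distrib]
      have hcs : ∀ j, ∃ cc : ℂ, y i j = fun a => cc * (starRingEnd ℂ) (x i j a) := by
        intro j
        apply cs_eq (x := x i j)
        · intro h0
          exact (hx j).ne' (by rw [h0]; exact vnorm_eq_zero.2 rfl)
        · exact hfac j
      choose cc hcc using hcs
      have hsij : ∀ j, s i j = cc j * (((vnorm (x i j))^2 : ℝ) : ℂ) := by
        intro j
        calc s i j = ∑ a, x i j a * (cc j * (starRingEnd ℂ) (x i j a)) := by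
              rw [hs]
              dsimp only
              apply Finset.sum_congr rfl
              intro a _
              rw [congrFun (hcc j) a]
          _ = cc j * ∑ a, x i j a * (starRingEnd ℂ) (x i j a) := by
              rw [Finset.mul_sum]
              apply Finset.sum_congr rfl
              intro a _
              ring
          _ = cc j * (((vnorm (x i j))^2 : ℝ) : ℂ) := by rw [sum_mul_conj]
      have hprod_s : (∏ j, s i j) = ((c i : ℝ) : ℂ) := by
        have h2 := complex_re_norm_eq (heq_ab i)
        rw [h2, heq_bc i]
      set P : ℂ := ((∏ j, vnorm (x i j) : ℝ) : ℂ) with hP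
      have hPne : P ≠ 0 := by
        rw [hP]
        simp only [ne_eq, Complex.ofReal_eq_zero]
        exact (Finset.prod_pos (fun j _ => hx j)).ne'
      have hci : ((c i : ℝ) : ℂ) = (∏ j, cc j) * P^2 := by
        calc ((c i : ℝ) : ℂ) = ∏ j, s i j := hprod_s.symm
          _ = ∏ j, (cc j * (((vnorm (x i j))^2 : ℝ) : ℂ)) :=
              Finset.prod_congr rfl fun j _ => hsij j
          _ = (∏ j, cc j) * ∏ j, (((vnorm (x i j))^2 : ℝ) : ℂ) := Finset.prod_mul_distrib
          _ = (∏ j, cc j) * P^2 := by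
              rw [hP]
              congr 1
              push_cast
              rw [Finset.prod_pow]
      have hya : (∏ j, y i j (b j)) = (∏ j, cc j) * ∏ j, (starRingEnd ℂ) (x i j (b j)) := by
        rw [Finset.prod_congr rfl fun j (_ : j ∈ Finset.univ) => congrFun (hcc j) (b j),
          Finset.prod_mul_distrib]
      have hxua : (∏ j, xu i j (a j)) = P⁻¹ * ∏ j, x i j (a j) := by
        rw [hxu]
        dsimp only
        rw [dif_neg h, Finset.prod_mul_distrib, prod_inv_cast (fun j => vnorm (x i j)), hP]
      have hxub : (∏ j, (starRingEnd ℂ) (xu i j (b j)))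
          = P⁻¹ * ∏ j, (starRingEnd ℂ) (x i j (b j)) := by
        rw [hxu]
        dsimp only
        rw [dif_neg h]
        have : ∀ j, (starRingEnd ℂ) ((((vnorm (x i j))⁻¹ : ℝ) : ℂ) * x i j (b j))
            = (((vnorm (x i j))⁻¹ : ℝ) : ℂ) * (starRingEnd ℂ) (x i j (b j)) := by
          intro j
          rw [map_mul, Complex.conj_ofReal]
        rw [Finset.prod_congr rfl fun j _ => this j, Finset.prod_mul_distrib,
          prod_inv_cast (fun j => vnorm (x i j)), hP]
      rw [hya, hxua, hxub, hci]
      have key : ∀ (Q u v w : ℂ), Q ≠ 0 →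
          u * (w * v) = (w * Q^2) * ((Q⁻¹ * u) * (Q⁻¹ * v)) := by
        intro Q u v w hQ
        field_simp
      exact key P _ _ _ hPne

end VN

/-- A density tensor `A` satisfies `‖A‖₁ ≥ 1`, with equality iff `A` is
separable. -/
theorem stmt8 (d : ℕ) (hd : 1 ≤ d) (n : Fin d → ℕ) (hn : ∀ j, 1 ≤ n j)
    (A : MIdx d n → MIdx d n → ℂ) (hA : IsDensity A) :
    1 ≤ nucNorm2 A ∧ (nucNorm2 A = 1 ↔ Separable A) := by
  obtain ⟨hpsd, htr⟩ := hA
  refine ⟨VN.one_le_nucNorm2 hd htr, ?_, fun hsep => VN.nucNorm2_eq_one_of_sep hd htr hsep⟩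
  intro h1
  obtain ⟨r, hr, hrle⟩ := VN.exists_decomp_le_one hd (VN.mem_hull_of_nucNorm_eq_one hd h1)
  obtain ⟨m, x, y, hAeq, hreq⟩ := hr
  exact VN.sep_of_decomp hd hn htr m x y hAeq (by rw [← hreq]; exact hrle)
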